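/- arXiv:math/0606093 — 2 statements merged into one kernel-verified Lean document; each statement's English description precedes it below -/
import Mathlib

section
/- Let u be a basic commutator of weight > 1 on x_1,…,x_r, written u = [c_1, c_2, …, c_n] (left-normed) with each c_i basic, wt(c_1) = 1, and c_2 ≤ c_3 ≤ ⋯ ≤ c_n. Let v be a basic commutator with v < u. Then [u ← v] equals [c_1, v, c_2, …, c_n] if c_2 > v, and [c_1, …, c_j, v, c_{j+1}, …, c_n] where j is the largest index with c_j ≤ v, otherwise. -/
/-- Formal commutators on the letters `x_0 < x_1 < ⋯ < x_{r-1}`. -/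
inductive BC (r : ℕ) : Type
  | leaf : Fin r → BC r
  | comm : BC r → BC r → BC r

namespace BC

variable {r : ℕ}

/-- The weight of a formal commutator in the letters. -/
def wt : BC r → ℕ
  | leaf _ => 1
  | comm a b => wt a + wt b

/-- Size (used for termination). -/
def size : BC r → ℕ
  | leaf _ => 1
  | comm a b => size a + size b + 1

/-- An injective encoding of formal commutators into `ℕ`, used to fix a
definite total order among basic commutators of the same weight. -/
def enc : BC r → ℕ
  | leaf i => Nat.pair 0 i
  | comm a b => Nat.pair 1 (Nat.pair (enc a) (enc b))

/-- The order on formal commutators: first by weight, then by the fixed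
encoding within each weight. -/
def lt (a b : BC r) : Prop :=
  wt a < wt b ∨ (wt a = wt b ∧ enc a < enc b)

instance : DecidableRel (lt (r := r)) := fun a b => by
  unfold lt; infer_instance

theorem lt_asymm' {a b : BC r} (h : lt a b) : ¬ lt b a := by
  rcases h with h | ⟨he, h⟩ <;> rintro (h' | ⟨he', h'⟩) <;> omega

/-- Basic commutators: the letters are basic of weight 1, and `[c₁,c₂]` is
basic when `c₁, c₂` are basic, `c₁ > c₂`, and whenever `c₁ = [a,b]` we have
`b ≤ c₂`. -/
inductive IsBasic : BC r → Prop
  | leaf (i : Fin r) : IsBasic (leaf i)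
  | comm {c₁ c₂ : BC r} : IsBasic c₁ → IsBasic c₂ → lt c₂ c₁ →
      (∀ a b, c₁ = BC.comm a b → ¬ lt c₂ b) → IsBasic (BC.comm c₁ c₂)

/-- The shove operation `[u ← v]`: `[u ← v] = [v ← u]` if `v > u`;
`[u ← v] = [[c₁ ← v], c₂]` if `v < u`, `u = [c₁,c₂]` and `c₂ > v`;
`[u ← v] = [u,v]` otherwise. -/
def shove : BC r → BC r → BC r
  | u, v =>
    if h : lt u v then shove v u
    else
      match u with
      | leaf i => comm (leaf i) v
      | comm c₁ c₂ => if lt v c₂ then comm (shove c₁ v) c₂ else comm (comm c₁ c₂) v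
  termination_by u v => (size u + size v, if lt u v then 1 else 0)
  decreasing_by
  · exact Prod.Lex.right' _ (by omega) (by simp [h, lt_asymm' h])
  · exact Prod.Lex.left _ _ (by simp [size] <;> omega)


/-- Left-normed commutator: `leftNormed c [d₁,…,dₙ] = [c,d₁,…,dₙ]`. -/
def leftNormed {r : ℕ} (c : BC r) : List (BC r) → BC r
  | [] => c
  | d :: l => leftNormed (comm c d) l

/-- Insert `v` into a list right after the last entry `≤ v` (i.e. before the
first entry `> v`). -/
def insertAfterLE {r : ℕ} (v : BC r) : List (BC r) → List (BC r)
  | [] => [v]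
  | d :: l => if lt v d then v :: d :: l else d :: insertAfterLE v l

theorem lt_trans' {a b c : BC r} (h1 : lt a b) (h2 : lt b c) : lt a c := by
  unfold lt at *; omega

theorem not_lt_trans {a b c : BC r} (h1 : ¬ lt b a) (h2 : ¬ lt c b) : ¬ lt c a := by
  unfold lt at *; omega

theorem one_le_wt (a : BC r) : 1 ≤ wt a := by
  induction a with
  | leaf i => simp [wt]
  | comm a b ha hb => simp [wt]; omega

theorem leftNormed_append (c : BC r) (l : List (BC r)) (d : BC r) :
    leftNormed c (l ++ [d]) = comm (leftNormed c l) d := by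
  induction l generalizing c with
  | nil => rfl
  | cons e l ih => simp [leftNormed, ih]

theorem insertAfterLE_append_of_lt (v d : BC r) (l : List (BC r)) (h : lt v d) :
    insertAfterLE v (l ++ [d]) = insertAfterLE v l ++ [d] := by
  induction l with
  | nil => simp [insertAfterLE, h]
  | cons e l ih =>
    by_cases he : lt v e <;> simp [insertAfterLE, he, ih]

theorem insertAfterLE_of_forall (v : BC r) (l : List (BC r))
    (h : ∀ x ∈ l, ¬ lt v x) : insertAfterLE v l = l ++ [v] := by
  induction l with
  | nil => rfl
  | cons e l ih =>
    have he : ¬ lt v e := h e (by simp)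
    simp [insertAfterLE, he, ih fun x hx => h x (by simp [hx])]

theorem shove_aux (l : List (BC r)) : ∀ (c v : BC r),
    IsBasic (leftNormed c l) → lt v (leftNormed c l) →
    l.Pairwise (fun a b => ¬ lt b a) →
    (∀ a b, c = comm a b → ¬ lt v b) →
    shove (leftNormed c l) v = leftNormed c (insertAfterLE v l) := by
  induction l using List.reverseRecOn with
  | nil =>
    intro c v _ hv hb
    simp only [leftNormed] at hv ⊢
    rw [shove]
    simp only [lt_asymm' hv, dif_neg, not_false_iff]
    match c with
    | leaf i => intro _; rfl
    | comm a b =>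
      intro hb'
      show (if lt v b then comm (shove a v) b else comm (comm a b) v)
          = leftNormed (comm a b) (insertAfterLE v [])
      rw [if_neg (hb' a b rfl)]
      rfl
  | append_singleton l d ih =>
    intro c v hB hv hp hb
    rw [leftNormed_append] at hB hv ⊢
    have hnuv : ¬ lt (comm (leftNormed c l) d) v := lt_asymm' hv
    rw [shove]
    simp only [hnuv, dif_neg, not_false_iff]
    by_cases hvd : lt v d
    · -- recurse into the prefix
      have hBpre : IsBasic (leftNormed c l) := by
        cases hB with
        | comm h1 h2 h3 h4 => exact h1
      have hdpre : lt d (leftNormed c l) := by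
        cases hB with
        | comm h1 h2 h3 h4 => exact h3
      have hvpre : lt v (leftNormed c l) := lt_trans' hvd hdpre
      have hp' : l.Pairwise (fun a b => ¬ lt b a) :=
        (List.pairwise_append.mp hp).1
      rw [if_pos hvd, ih c v hBpre hvpre hp' hb,
        insertAfterLE_append_of_lt v d l hvd, leftNormed_append]
    · -- append at the end
      rw [if_neg hvd]
      have hall : ∀ x ∈ l ++ [d], ¬ lt v x := by
        intro x hx
        rcases List.mem_append.mp hx with hx | hx
        · have hxd : ¬ lt d x := by
            have := (List.pairwise_append.mp hp).2.2
            exact this x hx d (by simp)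
          exact not_lt_trans hxd hvd
        · simp at hx; subst hx; exact hvd
      rw [insertAfterLE_of_forall v (l ++ [d]) hall]
      rw [show l ++ [d] ++ [v] = (l ++ [d]) ++ [v] from rfl, leftNormed_append,
        leftNormed_append]

/-- Explicit description of the shove operation: if `u = [c₁,c₂,…,cₙ]` is a
basic commutator of weight `> 1` written left-normed with `wt c₁ = 1` and
`c₂ ≤ ⋯ ≤ cₙ`, and `v < u` is basic, then `[u ← v]` is obtained by inserting
`v` into the sequence `c₂,…,cₙ` after the last `cⱼ ≤ v` (in particular
`[u ← v] = [c₁,v,c₂,…,cₙ]` when `c₂ > v`). -/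
theorem shove_description {r : ℕ} (u v c₁ c₂ : BC r) (cs : List (BC r))
    (hu : IsBasic u) (hwt : 1 < wt u) (hv : IsBasic v) (hvu : lt v u)
    (huform : u = leftNormed c₁ (c₂ :: cs)) (hc₁ : wt c₁ = 1)
    (hbasic : IsBasic c₁ ∧ IsBasic c₂ ∧ ∀ d ∈ cs, IsBasic d)
    (hsorted : List.Chain' (fun a b => ¬ lt b a) (c₂ :: cs)) :
    shove u v = leftNormed c₁ (insertAfterLE v (c₂ :: cs)) := by
  subst huform
  apply shove_aux (c₂ :: cs) c₁ v hu hvu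
  · haveI : IsTrans (BC r) (fun a b => ¬ lt b a) :=
      ⟨fun _ _ _ h1 h2 => not_lt_trans h1 h2⟩
    exact List.isChain_iff_pairwise.mp hsorted
  · intro a b hab
    exfalso
    rw [hab] at hc₁
    have := one_le_wt a
    have := one_le_wt b
    simp [wt] at hc₁
    omega

end BC
end

section
/- Let u be a basic commutator of weight > 1 and v a basic commutator with v < u. Then the right entry of [u ← v] equals the maximum of v and the right entry of u. -/
namespace BC

variable {r : ℕ}

/-- Right entry of a commutator `[a,b]` is `b`; letters have none. -/
def rightEntry {r : ℕ} : BC r → Option (BC r)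
  | leaf _ => none
  | comm _ b => some b

theorem enc_inj : ∀ {a b : BC r}, enc a = enc b → a = b
  | leaf i, leaf j, h => by
    simp only [enc, Nat.pair_eq_pair] at h
    exact congrArg leaf (Fin.ext h.2)
  | leaf _, comm _ _, h => by simp [enc, Nat.pair_eq_pair] at h
  | comm _ _, leaf _, h => by simp [enc, Nat.pair_eq_pair] at h
  | comm a b, comm c d, h => by
    simp only [enc, Nat.pair_eq_pair] at h
    rw [enc_inj h.2.1, enc_inj h.2.2]

/-- If `u` is a basic commutator of weight `> 1` and `v < u` is basic, then
the right entry of `[u ← v]` is the larger of `v` and the right entry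
of `u`. -/
theorem rightEntry_shove {r : ℕ} (u v : BC r) (hu : IsBasic u)
    (hwt : 1 < wt u) (hv : IsBasic v) (hvu : lt v u) :
    ∀ a b : BC r, u = comm a b →
      rightEntry (shove u v) = some (if lt b v then v else b) := by
  rintro a b rfl
  have hnuv : ¬ lt (comm a b) v := lt_asymm' hvu
  rw [shove, dif_neg hnuv]
  by_cases h : lt v b
  · simp only [if_pos h, rightEntry]
    rw [if_neg (lt_asymm' h)]
  · simp only [if_neg h, rightEntry]
    by_cases h2 : lt b v
    · rw [if_pos h2]
    · have hwt' : wt v = wt b ∧ enc v = enc b := by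
        unfold lt at h h2; omega
      rw [if_neg h2, enc_inj hwt'.2]

end BC
end
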